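/- arXiv:2605.11397 — 6 statements merged into one kernel-verified Lean document; each statement's English description precedes it below -/
import Mathlib

section
/- Let X be a topological space and P ∈ X with D_P ≠ ∅ and S_P ≠ ∅. Then there exists a maximal chain C in the inclusion-ordered family F of test sets at P such that ⋂_{A ∈ C} A is not a test set (a 'bad' maximal chain). -/
open Filter Topology Set

/-- The family `S_P` of sequences in `X` converging to `P`. -/
def seqTo {X : Type*} [TopologicalSpace X] (P : X) : Set (ℕ → X) :=
  {T | Tendsto T atTop (𝓝 P)}

/-- The witness family `D(f)` of sequences converging to `P` along which
`f` fails to converge to `f P`. -/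
def witnessSet {X : Type*} [TopologicalSpace X] (P : X) (f : X → ℝ) : Set (ℕ → X) :=
  {T | Tendsto T atTop (𝓝 P) ∧ ¬ Tendsto (fun n => f (T n)) atTop (𝓝 (f P))}

/-- `A` is a test set at `P`: a subfamily of `S_P` meeting the witness family `D(f)`
of every function `f` discontinuous at `P`. -/
def IsTestSet {X : Type*} [TopologicalSpace X] (P : X) (A : Set (ℕ → X)) : Prop :=
  A ⊆ seqTo P ∧ ∀ f : X → ℝ, ¬ ContinuousAt f P → (A ∩ witnessSet P f).Nonempty

/-- Existence of a bad maximal chain: a maximal chain of test sets whose intersection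
is not a test set. -/
theorem exists_bad_maximal_chain {X : Type*} [TopologicalSpace X] (P : X)
    (hD : ∃ f : X → ℝ, ¬ ContinuousAt f P)
    (hS : (seqTo P).Nonempty) :
    ∃ C : Set (Set (ℕ → X)),
      (∀ A ∈ C, IsTestSet P A) ∧ IsChain (· ⊆ ·) C ∧
      (∀ C' : Set (Set (ℕ → X)),
        (∀ A ∈ C', IsTestSet P A) → IsChain (· ⊆ ·) C' → C ⊆ C' → C' = C) ∧
      ¬ IsTestSet P (⋂₀ C) := by
  classical
  by_cases hall : ∀ g : X → ℝ, ¬ ContinuousAt g P → (witnessSet P g).Nonempty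
  · -- Main case: every discontinuous function has a witness sequence.
    obtain ⟨f₀, hf₀⟩ := hD
    set A : ℕ → Set (ℕ → X) := fun k =>
      {T | T ∈ seqTo P ∧ (T ∉ witnessSet P f₀ ∨ ∀ n < k, T n = P)} with hA
    have hAtest : ∀ k, IsTestSet P (A k) := by
      intro k
      refine ⟨fun T hT => hT.1, ?_⟩
      intro g hg
      obtain ⟨T, hT1, hT2⟩ := hall g hg
      set T' : ℕ → X := fun n => if n < k then P else T n with hT'
      have heq : T' =ᶠ[atTop] T := by
        refine eventually_atTop.2 ⟨k, fun n hn => ?_⟩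
        simp [hT', Nat.not_lt.2 hn]
      have hT'tendsto : Tendsto T' atTop (𝓝 P) := Tendsto.congr' heq.symm hT1
      have hT'not : ¬ Tendsto (fun n => g (T' n)) atTop (𝓝 (g P)) := by
        intro h
        apply hT2
        refine Tendsto.congr' ?_ h
        filter_upwards [heq] with n hn
        rw [hn]
      refine ⟨T', ⟨hT'tendsto, Or.inr fun n hn => ?_⟩, hT'tendsto, hT'not⟩
      simp [hT', hn]
    have hAanti : ∀ j k : ℕ, j ≤ k → A k ⊆ A j := by
      intro j k hjk T hT
      refine ⟨hT.1, ?_⟩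
      rcases hT.2 with h | h
      · exact Or.inl h
      · exact Or.inr fun n hn => h n (lt_of_lt_of_le hn hjk)
    -- the subtype of test sets
    let α := {B : Set (ℕ → X) // IsTestSet P B}
    let c : Set α := Set.range (fun k => (⟨A k, hAtest k⟩ : α))
    have hc : IsChain (fun a b : α => a.val ⊆ b.val) c := by
      rintro a ⟨j, rfl⟩ b ⟨k, rfl⟩ _
      rcases le_total j k with h | h
      · exact Or.inr (hAanti j k h)
      · exact Or.inl (hAanti k j h)
    obtain ⟨M, hM, hcM⟩ := hc.exists_maxChain
    refine ⟨Subtype.val '' M, ?_, ?_, ?_, ?_⟩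
    · rintro B ⟨⟨B, hB⟩, _, rfl⟩
      exact hB
    · rintro B ⟨b, hb, rfl⟩ B' ⟨b', hb', rfl⟩ hne
      exact hM.1 hb hb' (fun h => hne (by rw [h]))
    · intro C' hC'test hC'chain hsub
      set M' : Set α := {a : α | a.val ∈ C'} with hM'
      have hMM' : M ⊆ M' := fun a ha => hsub ⟨a, ha, rfl⟩
      have hM'chain : IsChain (fun a b : α => a.val ⊆ b.val) M' := by
        intro a ha b hb hne
        exact hC'chain ha hb (fun h => hne (Subtype.coe_injective h))
      have : M = M' := hM.2 hM'chain hMM'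
      apply Set.Subset.antisymm _ hsub
      intro B hB
      refine ⟨⟨B, hC'test B hB⟩, ?_, rfl⟩
      rw [this]
      exact hB
    · rintro ⟨-, hmeet⟩
      obtain ⟨T, hT1, hT2, hT3⟩ := hmeet f₀ hf₀
      have hTA : ∀ k, T ∈ A k := by
        intro k
        exact hT1 (A k) ⟨⟨A k, hAtest k⟩, hcM ⟨k, rfl⟩, rfl⟩
      have hTP : ∀ n, T n = P := by
        intro n
        rcases (hTA (n + 1)).2 with h | h
        · exact absurd ⟨hT2, hT3⟩ h
        · exact h n (Nat.lt_succ_self n)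
      apply hT3
      have : (fun n => f₀ (T n)) = fun _ => f₀ P := by
        funext n; rw [hTP n]
      rw [this]
      exact tendsto_const_nhds
  · -- Degenerate case: some discontinuous g has no witnesses, so no test sets exist.
    push_neg at hall
    obtain ⟨g, hg, hgw⟩ := hall
    refine ⟨∅, by simp, by simp, ?_, ?_⟩
    · intro C' hC'test _ _
      rw [Set.eq_empty_iff_forall_notMem]
      intro B hB
      exact Set.not_nonempty_empty (hgw ▸ ((hC'test B hB).2 g hg).mono Set.inter_subset_right)
    · rintro ⟨-, hmeet⟩
      exact Set.not_nonempty_empty (hgw ▸ (hmeet g hg).mono Set.inter_subset_right)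
end

section
/- Let X be a topological space and P ∈ X; assume (X,P) is Fréchet–Urysohn at P, X is T1 at P, P is non-isolated, and D_P ≠ ∅. Let M ⊆ I_P be a MAD family, and for each M ∈ M let T^M : ℕ → X be an injective sequence converging to P with range M. Then A_min := {T^M : M ∈ M} is a test set: for every f : X → ℝ discontinuous at P, some T^M satisfies that f(T^M_n) does not converge to f(P). -/
open Filter Topology Set

/-- The family `I_P`: countably infinite subsets of `X \ {P}` that are almost contained
in every open neighborhood of `P`. -/
def rangeFamily {X : Type*} [TopologicalSpace X] (P : X) : Set (Set X) :=
  {M | M ⊆ {P}ᶜ ∧ M.Countable ∧ M.Infinite ∧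
    ∀ U : Set X, IsOpen U → P ∈ U → (M \ U).Finite}

/-- `ℳ ⊆ I_P` is a maximal almost disjoint (MAD) family: distinct members have finite
intersection, and every member of `I_P` meets some member of `ℳ` in an infinite set. -/
def IsMadFamily {X : Type*} [TopologicalSpace X] (P : X) (ℳ : Set (Set X)) : Prop :=
  ℳ ⊆ rangeFamily P ∧
    (∀ A ∈ ℳ, ∀ B ∈ ℳ, A ≠ B → (A ∩ B).Finite) ∧
    (∀ S ∈ rangeFamily P, ∃ N ∈ ℳ, (S ∩ N).Infinite)

/-- Under the standing framework, the family of chosen injective enumerations of the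
members of a MAD family is a test set. -/
theorem mad_enumeration_isTestSet {X : Type*} [TopologicalSpace X] (P : X)
    (hFU : ∀ A : Set X, P ∈ closure A →
      ∃ a : ℕ → X, (∀ n, a n ∈ A) ∧ Tendsto a atTop (𝓝 P))
    (hT1 : ∀ x : X, x ≠ P → ∃ U : Set X, IsOpen U ∧ P ∈ U ∧ x ∉ U)
    (hni : ∀ U ∈ 𝓝 P, ∃ x ∈ U, x ≠ P)
    (hD : ∃ f : X → ℝ, ¬ ContinuousAt f P)
    (ℳ : Set (Set X)) (hℳ : IsMadFamily P ℳ)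
    (T : Set X → ℕ → X)
    (hT : ∀ M ∈ ℳ, Function.Injective (T M) ∧
      Tendsto (T M) atTop (𝓝 P) ∧ Set.range (T M) = M) :
    IsTestSet P (T '' ℳ) := by
  obtain ⟨hsub, hdisj, hmax⟩ := hℳ
  constructor
  · rintro _ ⟨M, hM, rfl⟩
    exact (hT M hM).2.1
  · intro f hf
    -- Step 1: extract ε > 0
    have hε : ∃ ε > (0:ℝ), ∀ U : Set X, IsOpen U → P ∈ U →
        ∃ x ∈ U, ε ≤ dist (f x) (f P) := by
      by_contra h
      push_neg at h
      apply hf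
      rw [ContinuousAt, Metric.tendsto_nhds]
      intro ε hε
      obtain ⟨U, hUo, hPU, hU⟩ := h ε hε
      filter_upwards [hUo.mem_nhds hPU] with x hx using hU x hx
    obtain ⟨ε, hε0, hεP⟩ := hε
    -- Step 2: sequence in A converging to P
    set A : Set X := {x | ε ≤ dist (f x) (f P)} with hA
    have hPA : P ∈ closure A := by
      rw [mem_closure_iff]
      intro U hUo hPU
      obtain ⟨x, hxU, hx⟩ := hεP U hUo hPU
      exact ⟨x, hxU, hx⟩
    obtain ⟨a, haA, haT⟩ := hFU A hPA
    have hne : ∀ n, a n ≠ P := by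
      intro n hn
      have := haA n
      rw [hA, mem_setOf_eq, hn, dist_self] at this
      linarith
    -- Step 3: range a ∈ rangeFamily P
    have hSfam : Set.range a ∈ rangeFamily P := by
      refine ⟨?_, countable_range a, ?_, ?_⟩
      · rintro _ ⟨n, rfl⟩
        exact hne n
      · -- infinite
        intro hfin
        haveI := hfin.to_subtype
        obtain ⟨y, hy⟩ := Finite.exists_infinite_fiber
          (fun n => (⟨a n, mem_range_self n⟩ : Set.range a))
        obtain ⟨m, hm⟩ := y.2
        have hyne : (y : X) ≠ P := hm ▸ hne m
        obtain ⟨U, hUo, hPU, hxU⟩ := hT1 y hyne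
        obtain ⟨N, hN⟩ := (eventually_atTop).mp (haT.eventually (hUo.eventually_mem hPU))
        obtain ⟨n, hn, hnN⟩ := (Set.infinite_coe_iff.mp hy).exists_gt N
        have : a n = (y : X) := by
          simpa [Subtype.ext_iff] using hn
        exact hxU (this ▸ hN n hnN.le)
      · intro U hUo hPU
        obtain ⟨N, hN⟩ := (eventually_atTop).mp (haT.eventually (hUo.eventually_mem hPU))
        have : Set.range a \ U ⊆ a '' (Set.Iio N) := by
          rintro _ ⟨⟨n, rfl⟩, hnU⟩
          refine ⟨n, ?_, rfl⟩
          by_contra hlt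
          exact hnU (hN n (not_lt.mp hlt))
        exact ((Set.finite_Iio N).image a).subset this
    -- Step 4: MADness
    obtain ⟨N, hN, hinf⟩ := hmax _ hSfam
    obtain ⟨hinj, htend, hrange⟩ := hT N hN
    refine ⟨T N, ⟨N, hN, rfl⟩, htend, ?_⟩
    intro hconv
    have hpre : ((T N) ⁻¹' (Set.range a ∩ N)).Infinite :=
      hinf.preimage (by rw [hrange]; exact inter_subset_right)
    obtain ⟨N₀, hN₀⟩ := (eventually_atTop).mp ((Metric.tendsto_nhds.mp hconv) ε hε0)
    obtain ⟨n, hn, hnN₀⟩ := hpre.exists_gt N₀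
    obtain ⟨⟨m, hm⟩, -⟩ := hn
    have : ε ≤ dist (f (T N n)) (f P) := hm ▸ haA m
    linarith [hN₀ n hnN₀.le]
end

section
/- Let X be a topological space and P ∈ X; assume (X,P) is Fréchet–Urysohn at P, X is T1 at P, P is non-isolated, and D_P ≠ ∅. Let M ⊆ I_P be a MAD family, and for each M ∈ M let T^M : ℕ → X be an injective sequence converging to P with range M. Then A_min := {T^M : M ∈ M} is a minimal test set: A_min is a test set, and no proper subset of A_min is a test set. -/
open Filter Topology Set

/-- From discontinuity: some ε > 0 such that frequently near P, dist (f x) (f P) ≥ ε. -/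
lemma exists_eps_of_not_continuousAt {X : Type*} [TopologicalSpace X] (P : X)
    (f : X → ℝ) (h : ¬ ContinuousAt f P) :
    ∃ ε > (0:ℝ), ∃ᶠ x in 𝓝 P, ε ≤ dist (f x) (f P) := by
  rw [ContinuousAt, Metric.tendsto_nhds] at h
  push_neg at h
  obtain ⟨ε, hε, hfreq⟩ := h
  exact ⟨ε, hε, (Filter.not_eventually.mp hfreq).mono fun x hx => not_not.mp hx⟩

/-- Under the standing framework, the family of chosen injective enumerations of the
members of a MAD family is a minimal test set: it is a test set and no proper subset
of it is a test set. -/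
theorem mad_enumeration_isMinimalTestSet {X : Type*} [TopologicalSpace X] (P : X)
    (hFU : ∀ A : Set X, P ∈ closure A →
      ∃ a : ℕ → X, (∀ n, a n ∈ A) ∧ Tendsto a atTop (𝓝 P))
    (hT1 : ∀ x : X, x ≠ P → ∃ U : Set X, IsOpen U ∧ P ∈ U ∧ x ∉ U)
    (hni : ∀ U ∈ 𝓝 P, ∃ x ∈ U, x ≠ P)
    (hD : ∃ f : X → ℝ, ¬ ContinuousAt f P)
    (ℳ : Set (Set X)) (hℳ : IsMadFamily P ℳ)
    (T : Set X → ℕ → X)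
    (hT : ∀ M ∈ ℳ, Function.Injective (T M) ∧
      Tendsto (T M) atTop (𝓝 P) ∧ Set.range (T M) = M) :
    IsTestSet P (T '' ℳ) ∧
      ∀ B : Set (ℕ → X), B ⊂ T '' ℳ → ¬ IsTestSet P B := by
  obtain ⟨hsub, hAD, hmax⟩ := hℳ
  constructor
  · constructor
    · rintro g ⟨M, hM, rfl⟩
      exact (hT M hM).2.1
    · intro f hf
      obtain ⟨ε, hε, hfreq⟩ := exists_eps_of_not_continuousAt P f hf
      set A₀ : Set X := {x | ε ≤ dist (f x) (f P)} with hA₀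
      have hPcl : P ∈ closure A₀ := mem_closure_iff_frequently.mpr hfreq
      obtain ⟨a, haA, haP⟩ := hFU A₀ hPcl
      have haneP : ∀ n, a n ≠ P := by
        intro n hn
        have := haA n
        rw [hn] at this
        simp only [hA₀, mem_setOf_eq, dist_self] at this
        linarith
      -- the range of a is in rangeFamily P
      have hS : range a ∈ rangeFamily P := by
        refine ⟨?_, countable_range a, ?_, ?_⟩
        · rintro x ⟨n, rfl⟩; exact haneP n
        · -- infinite
          intro hfin
          have : Finite (range a) := hfin
          obtain ⟨⟨x, hxr⟩, hx⟩ :=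
            Finite.exists_infinite_fiber (fun n => (⟨a n, mem_range_self n⟩ : range a))
          obtain ⟨U, hUopen, hPU, hxU⟩ := hT1 x (by obtain ⟨n, rfl⟩ := hxr; exact haneP n)
          have hev : ∀ᶠ n in atTop, a n ∈ U := haP (hUopen.mem_nhds hPU)
          have hfreq' : ∃ᶠ n in atTop, a n = x := by
            rw [Nat.frequently_atTop_iff_infinite]
            refine (Set.infinite_coe_iff.mp hx).mono ?_
            intro n hn
            simpa [Subtype.ext_iff] using hn
          obtain ⟨n, hnx, hnU⟩ := (hfreq'.and_eventually hev).exists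
          exact hxU (hnx ▸ hnU)
        · intro U hU hPU
          obtain ⟨N, hN⟩ := eventually_atTop.mp (haP (hU.mem_nhds hPU))
          have : range a \ U ⊆ a '' (Set.Iio N) := by
            rintro x ⟨⟨n, rfl⟩, hnU⟩
            refine ⟨n, ?_, rfl⟩
            by_contra hn
            exact hnU (hN n (le_of_not_gt hn))
          exact ((Set.finite_Iio N).image a).subset this
      obtain ⟨N, hNℳ, hNinf⟩ := hmax (range a) hS
      obtain ⟨hinj, htend, hrange⟩ := hT N hNℳ
      refine ⟨T N, ⟨N, hNℳ, rfl⟩, htend, ?_⟩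
      intro htf
      have hpre : (T N ⁻¹' (range a ∩ N)).Infinite :=
        hNinf.preimage (by rw [hrange]; exact inter_subset_right)
      have hfreq2 : ∃ᶠ n in atTop, ε ≤ dist (f (T N n)) (f P) := by
        rw [Nat.frequently_atTop_iff_infinite]
        refine hpre.mono ?_
        rintro n ⟨⟨m, hm⟩, -⟩
        show ε ≤ dist (f (T N n)) (f P)
        rw [← hm]
        exact haA m
      have hev2 : ∀ᶠ n in atTop, dist (f (T N n)) (f P) < ε :=
        Metric.tendsto_nhds.mp htf ε hε
      obtain ⟨n, h1, h2⟩ := (hfreq2.and_eventually hev2).exists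
      linarith
  · -- minimality
    rintro B hB ⟨hBsub, hBtest⟩
    obtain ⟨g, hgA, hgB⟩ := exists_of_ssubset hB
    obtain ⟨M₀, hM₀ℳ, rfl⟩ := hgA
    obtain ⟨hMP, hMc, hMinf, hMnbhd⟩ := hsub hM₀ℳ
    set f : X → ℝ := M₀.indicator 1 with hf
    have hfP : f P = 0 := indicator_of_notMem (fun h => hMP h rfl) 1
    have hdisc : ¬ ContinuousAt f P := by
      intro hc
      rw [ContinuousAt, hfP, Metric.tendsto_nhds] at hc
      obtain ⟨V, hVsub, hVopen, hPV⟩ := mem_nhds_iff.mp (hc 1 one_pos)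
      have hinter : (M₀ ∩ V).Infinite := by
        have := hMinf.diff (hMnbhd V hVopen hPV)
        refine this.mono ?_
        rintro x ⟨hxM, hx⟩
        exact ⟨hxM, by by_contra h; exact hx ⟨hxM, h⟩⟩
      obtain ⟨x, hxM, hxV⟩ := hinter.nonempty
      have : dist (f x) 0 < 1 := hVsub hxV
      rw [hf, indicator_of_mem hxM] at this
      simp at this
    obtain ⟨g, hgB', htend', hnt⟩ := hBtest f hdisc
    obtain ⟨N, hNℳ, rfl⟩ := hB.1 hgB'
    obtain ⟨hinj, -, hrange⟩ := hT N hNℳ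
    have hNe : N ≠ M₀ := by
      rintro rfl
      exact hgB hgB'
    have hfin : (T N ⁻¹' M₀).Finite := by
      have heq : T N ⁻¹' M₀ = T N ⁻¹' (N ∩ M₀) := by
        ext n
        simp only [mem_preimage, mem_inter_iff]
        exact ⟨fun h => ⟨hrange.subset (mem_range_self n), h⟩, fun h => h.2⟩
      rw [heq]
      exact (hAD N hNℳ M₀ hM₀ℳ hNe).preimage hinj.injOn
    apply hnt
    have hev0 : ∀ᶠ n in atTop, f (T N n) = 0 := by
      rw [← Nat.cofinite_eq_atTop]
      refine (Set.Finite.eventually_cofinite_notMem hfin).mono ?_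
      intro n hn
      exact indicator_of_notMem hn 1
    rw [hfP]
    exact Tendsto.congr' (EventuallyEq.symm hev0) tendsto_const_nhds
end

section
/- Let X be a topological space and P ∈ X; assume (X,P) is Fréchet–Urysohn at P, X is T1 at P, P is non-isolated, and D_P ≠ ∅. Then the inclusion-ordered family F of test sets at P has a minimal element: there exists a test set A such that every test set B with B ⊆ A equals A. -/
open Filter Topology Set

/-- A countably infinite set admits an injective enumeration. -/
lemma enum_exists {X : Type*} (N : Set X) (hc : N.Countable) (hi : N.Infinite) :
    ∃ e : ℕ → X, Function.Injective e ∧ Set.range e = N := by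
  haveI := hc.to_subtype
  haveI := hi.to_subtype
  obtain ⟨e⟩ : Nonempty (ℕ ≃ ↥N) := nonempty_equiv_of_countable
  refine ⟨fun n => (e n : X), ?_, ?_⟩
  · intro a b h
    exact e.injective (Subtype.ext h)
  · ext x
    constructor
    · rintro ⟨n, rfl⟩; exact (e n).2
    · intro hx; exact ⟨e.symm ⟨x, hx⟩, by simp⟩

/-- An injective enumeration of a member of `rangeFamily P` converges to `P`. -/
lemma tendsto_of_enum {X : Type*} [TopologicalSpace X] {P : X} {T : ℕ → X}
    (hinj : Function.Injective T) (hR : Set.range T ∈ rangeFamily P) :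
    Tendsto T atTop (𝓝 P) := by
  rw [(nhds_basis_opens P).tendsto_right_iff]
  rintro U ⟨hPU, hU⟩
  have hfin : (Set.range T \ U).Finite := hR.2.2.2 U hU hPU
  have hfin2 : {n | T n ∉ U}.Finite := by
    have : {n | T n ∉ U} = T ⁻¹' (Set.range T \ U) := by
      ext n; simp [Set.mem_preimage, Set.mem_diff, Set.mem_range_self]
    rw [this]
    exact hfin.preimage hinj.injOn
  have := hfin2.eventually_cofinite_notMem
  rw [Nat.cofinite_eq_atTop] at this
  filter_upwards [this] with n hn
  simpa using hn

/-- Every discontinuity has a witnessing sequence (Fréchet–Urysohn at `P`). -/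
lemma exists_witness_seq {X : Type*} [TopologicalSpace X] {P : X}
    (hFU : ∀ A : Set X, P ∈ closure A →
      ∃ a : ℕ → X, (∀ n, a n ∈ A) ∧ Tendsto a atTop (𝓝 P))
    {f : X → ℝ} (hf : ¬ ContinuousAt f P) : (witnessSet P f).Nonempty := by
  rw [ContinuousAt, Filter.tendsto_def] at hf
  push_neg at hf
  obtain ⟨s, hs, hns⟩ := hf
  set A : Set X := {x | f x ∉ s} with hA
  have hcl : P ∈ closure A := by
    by_contra hcl
    apply hns
    have : (closure A)ᶜ ∈ 𝓝 P := (isClosed_closure.isOpen_compl).mem_nhds hcl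
    filter_upwards [this] with x hx
    by_contra hxs
    exact hx (subset_closure hxs)
  obtain ⟨a, ha, hta⟩ := hFU A hcl
  refine ⟨a, hta, fun ht => ?_⟩
  have h2 : ∀ᶠ n in atTop, f (a n) ∈ s := ht hs
  obtain ⟨n, hn⟩ := h2.exists
  exact ha n hn

/-- From a witnessing sequence, extract a member of `rangeFamily P` on which
`f` avoids a fixed neighborhood of `f P`. -/
lemma extract_rangeFamily {X : Type*} [TopologicalSpace X] {P : X}
    (hT1 : ∀ x : X, x ≠ P → ∃ U : Set X, IsOpen U ∧ P ∈ U ∧ x ∉ U)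
    {f : X → ℝ} {T : ℕ → X} (hT : T ∈ witnessSet P f) :
    ∃ S ∈ rangeFamily P, ∃ s ∈ 𝓝 (f P), ∀ x ∈ S, f x ∉ s := by
  obtain ⟨htend, hnt⟩ := hT
  rw [Filter.tendsto_def] at hnt
  push_neg at hnt
  obtain ⟨s, hs, hns⟩ := hnt
  have hfreq : ∃ᶠ n in atTop, f (T n) ∉ s := by
    intro h
    exact hns (h.mono fun n hn => not_not.mp hn)
  have hIinf : {n | f (T n) ∉ s}.Infinite := Nat.frequently_atTop_iff_infinite.mp hfreq
  set I : Set ℕ := {n | f (T n) ∉ s} with hI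
  set S : Set X := T '' I with hSdef
  -- finitely many indices outside any neighborhood of P
  have hout : ∀ U : Set X, U ∈ 𝓝 P → {n | T n ∉ U}.Finite := by
    intro U hU
    have := htend hU
    rw [Filter.mem_map, ← Nat.cofinite_eq_atTop, Filter.mem_cofinite] at this
    exact this
  have hSP : S ⊆ {P}ᶜ := by
    rintro x ⟨n, hn, rfl⟩
    intro hx
    rw [Set.mem_singleton_iff] at hx
    subst hx
    exact hn (mem_of_mem_nhds hs)
  refine ⟨S, ⟨hSP, (Set.countable_univ.image T).mono (Set.image_mono (Set.subset_univ _)), ?_, ?_⟩, s, hs, ?_⟩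
  · -- S infinite
    intro hSfin
    have hfib : ∀ x ∈ S, {n | T n = x}.Finite := by
      intro x hxS
      obtain ⟨U, hUo, hPU, hxU⟩ := hT1 x (by simpa using hSP hxS)
      refine (hout U (hUo.mem_nhds hPU)).subset ?_
      intro n hn
      simp only [Set.mem_setOf_eq] at hn ⊢
      rw [hn]; exact hxU
    have : I.Finite := by
      refine (hSfin.biUnion hfib).subset ?_
      intro n hn
      exact Set.mem_biUnion (Set.mem_image_of_mem T hn) rfl
    exact hIinf this
  · -- almost contained in every open neighborhood
    intro U hUo hPU
    have : S \ U ⊆ T '' {n | T n ∉ U} := by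
      rintro x ⟨⟨n, hn, rfl⟩, hxU⟩
      exact ⟨n, hxU, rfl⟩
    exact ((hout U (hUo.mem_nhds hPU)).image T).subset this
  · rintro x ⟨n, hn, rfl⟩
    exact hn

/-- Existence of a MAD family, given `rangeFamily P` is nonempty. -/
lemma exists_mad {X : Type*} [TopologicalSpace X] (P : X)
    (hne : (rangeFamily P).Nonempty) : ∃ ℳ : Set (Set X), IsMadFamily P ℳ := by
  set 𝒜 : Set (Set (Set X)) :=
    {ℳ | ℳ ⊆ rangeFamily P ∧ ∀ A ∈ ℳ, ∀ B ∈ ℳ, A ≠ B → (A ∩ B).Finite} with h𝒜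
  have hchains : ∀ c ⊆ 𝒜, IsChain (· ⊆ ·) c → ∃ ub ∈ 𝒜, ∀ s ∈ c, s ⊆ ub := by
    intro c hc hchain
    refine ⟨⋃₀ c, ⟨?_, ?_⟩, fun s hs => Set.subset_sUnion_of_mem hs⟩
    · exact Set.sUnion_subset fun t ht => (hc ht).1
    · rintro A ⟨tA, htA, hAtA⟩ B ⟨tB, htB, hBtB⟩ hAB
      rcases hchain.total htA htB with h | h
      · exact (hc htB).2 A (h hAtA) B hBtB hAB
      · exact (hc htA).2 A hAtA B (h hBtB) hAB
  obtain ⟨ℳ, hmax⟩ := zorn_subset 𝒜 hchains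
  obtain ⟨hsub, had⟩ : ℳ ⊆ rangeFamily P ∧ ∀ A ∈ ℳ, ∀ B ∈ ℳ, A ≠ B → (A ∩ B).Finite := hmax.prop
  refine ⟨ℳ, hsub, had, ?_⟩
  intro S hS
  by_contra hcon
  push_neg at hcon
  have hSnotin : S ∉ ℳ := by
    intro hSin
    have := hcon S hSin
    rw [Set.inter_self] at this
    exact hS.2.2.1 this
  have : insert S ℳ ∈ 𝒜 := by
    constructor
    · exact Set.insert_subset hS hsub
    · intro A hA B hB hAB
      rcases hA with rfl | hA <;> rcases hB with rfl | hB
      · exact absurd rfl hAB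
      · exact hcon B hB
      · rw [Set.inter_comm]; exact hcon A hA
      · exact had A hA B hB hAB
  have hle : insert S ℳ ⊆ ℳ := hmax.2 this (Set.subset_insert _ _)
  exact hSnotin (hle (Set.mem_insert _ _))

/-- Existence of a minimal test set under the standing framework. -/
theorem exists_minimal_testSet {X : Type*} [TopologicalSpace X] (P : X)
    (hFU : ∀ A : Set X, P ∈ closure A →
      ∃ a : ℕ → X, (∀ n, a n ∈ A) ∧ Tendsto a atTop (𝓝 P))
    (hT1 : ∀ x : X, x ≠ P → ∃ U : Set X, IsOpen U ∧ P ∈ U ∧ x ∉ U)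
    (hni : ∀ U ∈ 𝓝 P, ∃ x ∈ U, x ≠ P)
    (hD : ∃ f : X → ℝ, ¬ ContinuousAt f P) :
    ∃ A : Set (ℕ → X), IsTestSet P A ∧
      ∀ B : Set (ℕ → X), IsTestSet P B → B ⊆ A → B = A := by
  -- rangeFamily P is nonempty
  obtain ⟨f0, hf0⟩ := hD
  obtain ⟨T0, hT0⟩ := exists_witness_seq hFU hf0
  obtain ⟨S0, hS0, -⟩ := extract_rangeFamily hT1 hT0
  obtain ⟨ℳ, hℳsub, hℳad, hℳmax⟩ := exists_mad P ⟨S0, hS0⟩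
  -- choose an enumeration of each member of ℳ
  have hch : ∀ m : ↥ℳ, ∃ e : ℕ → X, Function.Injective e ∧ Set.range e = (m : Set X) := by
    intro m
    have hm := hℳsub m.2
    exact enum_exists _ hm.2.1 hm.2.2.1
  choose g hginj hgrange using hch
  have hgR : ∀ m : ↥ℳ, Set.range (g m) ∈ rangeFamily P := by
    intro m; rw [hgrange]; exact hℳsub m.2
  have hgtend : ∀ m : ↥ℳ, Tendsto (g m) atTop (𝓝 P) := fun m =>
    tendsto_of_enum (hginj m) (hgR m)
  refine ⟨Set.range g, ⟨?_, ?_⟩, ?_⟩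
  · rintro T ⟨m, rfl⟩
    exact hgtend m
  · -- test set property
    intro f hf
    obtain ⟨T, hT⟩ := exists_witness_seq hFU hf
    obtain ⟨S, hS, s, hs, hSs⟩ := extract_rangeFamily hT1 hT
    obtain ⟨N, hN, hSN⟩ := hℳmax S hS
    refine ⟨g ⟨N, hN⟩, ⟨⟨N, hN⟩, rfl⟩, hgtend _, fun ht => ?_⟩
    set m : ↥ℳ := ⟨N, hN⟩
    have hpre : ((g m) ⁻¹' (S ∩ N)).Infinite := by
      refine hSN.preimage ?_
      rw [hgrange m]
      exact Set.inter_subset_right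
    have hfreq : ∃ᶠ n in atTop, g m n ∈ S ∩ N :=
      Nat.frequently_atTop_iff_infinite.mpr hpre
    have hev : ∀ᶠ n in atTop, f (g m n) ∈ s := ht hs
    obtain ⟨n, hn1, hn2⟩ := (hev.and_frequently hfreq).exists
    exact hSs _ hn2.1 hn1
  · -- minimality
    intro B hB hBA
    refine Set.Subset.antisymm hBA ?_
    rintro T ⟨m, rfl⟩
    set f : X → ℝ := Set.indicator (m : Set X) (fun _ => (1 : ℝ)) with hf
    have hPm : P ∉ (m : Set X) := fun h => (hℳsub m.2).1 h rfl
    have hfP : f P = 0 := Set.indicator_of_notMem hPm _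
    have hfm : ∀ x ∈ (m : Set X), f x = 1 := fun x hx => Set.indicator_of_mem hx _
    have hfdisc : ¬ ContinuousAt f P := by
      intro hc
      have h1 : Tendsto (fun n => f (g m n)) atTop (𝓝 (f P)) :=
        (hc.tendsto).comp (hgtend m)
      have h2 : (fun n => f (g m n)) = fun _ => (1 : ℝ) := by
        funext n
        exact hfm _ (by rw [← hgrange m]; exact Set.mem_range_self n)
      rw [h2, hfP] at h1
      exact zero_ne_one (tendsto_nhds_unique h1 tendsto_const_nhds)
    obtain ⟨T', hT'B, hT'tend, hT'nt⟩ := hB.2 f hfdisc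
    obtain ⟨m', rfl⟩ := hBA hT'B
    -- the index set where g m' lands in m is infinite
    have hK : {n | g m' n ∈ (m : Set X)}.Infinite := by
      by_contra hKfin
      rw [Set.not_infinite] at hKfin
      apply hT'nt
      rw [hfP]
      have hev : ∀ᶠ n in atTop, g m' n ∉ (m : Set X) := by
        rw [← Nat.cofinite_eq_atTop]
        exact hKfin.eventually_cofinite_notMem
      have : ∀ᶠ n in atTop, f (g m' n) = 0 := by
        filter_upwards [hev] with n hn
        exact Set.indicator_of_notMem hn _
      exact Tendsto.congr' (this.mono fun n h => h.symm) tendsto_const_nhds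
    have hint : ((m' : Set X) ∩ (m : Set X)).Infinite := by
      have : g m' '' {n | g m' n ∈ (m : Set X)} ⊆ (m' : Set X) ∩ (m : Set X) := by
        rintro x ⟨n, hn, rfl⟩
        exact ⟨by rw [← hgrange m']; exact Set.mem_range_self n, hn⟩
      exact ((hK.image (hginj m').injOn)).mono this
    have hmm : (m' : Set X) = (m : Set X) := by
      by_contra hne
      exact hint (hℳad _ m'.2 _ m.2 hne)
    have : m' = m := Subtype.ext hmm
    rwa [this] at hT'B
end

section
/- Let X be a topological space and P ∈ X; assume (X,P) is Fréchet–Urysohn at P, X is T1 at P, P is non-isolated, and D_P ≠ ∅. Then there exists a maximal chain C in the inclusion-ordered family F of test sets at P such that ⋂_{A ∈ C} A is itself a test set (a 'good' maximal chain). -/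
open Filter Topology Set

lemma aux_witness {X : Type*} [TopologicalSpace X] {P : X}
    (hFU : ∀ A : Set X, P ∈ closure A →
      ∃ a : ℕ → X, (∀ n, a n ∈ A) ∧ Tendsto a atTop (𝓝 P))
    {f : X → ℝ} (hf : ¬ ContinuousAt f P) :
    ∃ ε > (0:ℝ), ∃ a : ℕ → X, Tendsto a atTop (𝓝 P) ∧ ∀ n, ε ≤ dist (f (a n)) (f P) := by
  rw [ContinuousAt, Metric.tendsto_nhds] at hf
  push_neg at hf
  obtain ⟨ε, hε, hfreq⟩ := hf
  have hcl : P ∈ closure {x | ε ≤ dist (f x) (f P)} := by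
    rw [mem_closure_iff_frequently]
    have := Filter.not_eventually.mp hfreq
    exact this.mono fun x hx => of_not_not hx
  obtain ⟨a, haA, ha⟩ := hFU _ hcl
  exact ⟨ε, hε, a, ha, haA⟩

lemma aux_range {X : Type*} [TopologicalSpace X] {P : X}
    (hT1 : ∀ x : X, x ≠ P → ∃ U : Set X, IsOpen U ∧ P ∈ U ∧ x ∉ U)
    {a : ℕ → X} (ha : Tendsto a atTop (𝓝 P)) (hne : ∀ n, a n ≠ P) :
    Set.range a ∈ rangeFamily P := by
  have hev : ∀ U : Set X, IsOpen U → P ∈ U → ∀ᶠ n in atTop, a n ∈ U := fun U hU hP =>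
    ha (hU.mem_nhds hP)
  refine ⟨?_, Set.countable_range a, ?_, ?_⟩
  · rintro x ⟨n, rfl⟩; exact hne n
  · intro hfin
    haveI := hfin.to_subtype
    obtain ⟨⟨x, hx⟩, hinf⟩ := Finite.exists_infinite_fiber
      (fun n => (⟨a n, Set.mem_range_self n⟩ : Set.range a))
    have hxinf : {n | a n = x}.Infinite := by
      refine (Set.infinite_coe_iff.mp hinf).mono ?_
      intro n hn
      exact congrArg Subtype.val (Set.mem_singleton_iff.mp hn)
    have hxne : x ≠ P := by obtain ⟨n, rfl⟩ := hx; exact hne n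
    obtain ⟨U, hU, hPU, hxU⟩ := hT1 x hxne
    have := (hev U hU hPU).and_frequently
      (Nat.frequently_atTop_iff_infinite.mpr hxinf)
    obtain ⟨n, hnU, hnx⟩ := this.exists
    exact hxU (hnx ▸ hnU)
  · intro U hU hPU
    obtain ⟨N, hN⟩ := eventually_atTop.mp (hev U hU hPU)
    refine ((Set.finite_Iio N).image a).subset ?_
    rintro _ ⟨⟨n, rfl⟩, hnU⟩
    exact ⟨n, lt_of_not_ge fun h => hnU (hN n h), rfl⟩

lemma aux_enum {X : Type*} [TopologicalSpace X] {P : X} {M : Set X}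
    (hM : M ∈ rangeFamily P) :
    ∃ T : ℕ → X, Function.Injective T ∧ Set.range T = M ∧ Tendsto T atTop (𝓝 P) := by
  obtain ⟨hMP, hMc, hMi, hMU⟩ := hM
  haveI := hMc.to_subtype
  haveI := hMi.to_subtype
  obtain ⟨d⟩ := nonempty_denumerable (↥M)
  let E : ℕ ≃ ↥M := (Denumerable.eqv (↥M)).symm
  have hEinj : Function.Injective (fun n => ((E n : ↥M) : X)) :=
    fun m n h => E.injective (Subtype.ext h)
  refine ⟨fun n => (E n : X), hEinj, ?_, ?_⟩
  · have : Set.range (fun n => ((E n : ↥M) : X)) = Set.range (Subtype.val : ↥M → X) :=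
      E.surjective.range_comp _
    rw [this, Subtype.range_coe]
  · rw [tendsto_nhds]
    intro U hU hPU
    rw [← Nat.cofinite_eq_atTop, mem_cofinite]
    have hfin : ((fun n => ((E n : ↥M) : X)) ⁻¹' (M \ U)).Finite :=
      (hMU U hU hPU).preimage hEinj.injOn
    refine hfin.subset ?_
    intro n hn
    simp only [Set.mem_compl_iff, Set.mem_preimage] at hn ⊢
    exact ⟨(E n).2, hn⟩

lemma aux_mad {X : Type*} [TopologicalSpace X] (P : X) :
    ∃ ℳ : Set (Set X), ℳ ⊆ rangeFamily P ∧
      (∀ A ∈ ℳ, ∀ B ∈ ℳ, A ≠ B → (A ∩ B).Finite) ∧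
      (∀ S ∈ rangeFamily P, ∃ N ∈ ℳ, (S ∩ N).Infinite) := by
  have hz : ∀ c ⊆ {𝒜 : Set (Set X) | 𝒜 ⊆ rangeFamily P ∧
      ∀ A ∈ 𝒜, ∀ B ∈ 𝒜, A ≠ B → (A ∩ B).Finite}, IsChain (· ⊆ ·) c →
      ∃ ub ∈ {𝒜 : Set (Set X) | 𝒜 ⊆ rangeFamily P ∧
      ∀ A ∈ 𝒜, ∀ B ∈ 𝒜, A ≠ B → (A ∩ B).Finite}, ∀ s ∈ c, s ⊆ ub := by
    intro c hcS hc
    refine ⟨⋃₀ c, ⟨?_, ?_⟩, fun s hs => Set.subset_sUnion_of_mem hs⟩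
    · rintro A ⟨𝒜, h𝒜, hA⟩; exact (hcS h𝒜).1 hA
    · rintro A ⟨𝒜, h𝒜, hA⟩ B ⟨ℬ, hℬ, hB⟩ hne
      rcases hc.total h𝒜 hℬ with hab | hba
      · exact (hcS hℬ).2 A (hab hA) B hB hne
      · exact (hcS h𝒜).2 A hA B (hba hB) hne
  obtain ⟨ℳ, hℳ⟩ := zorn_subset
    {𝒜 : Set (Set X) | 𝒜 ⊆ rangeFamily P ∧ ∀ A ∈ 𝒜, ∀ B ∈ 𝒜, A ≠ B → (A ∩ B).Finite} hz
  · obtain ⟨⟨hsub, hAD⟩, hmax⟩ := hℳ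
    refine ⟨ℳ, hsub, hAD, ?_⟩
    intro S hS
    by_contra h
    push_neg at h
    have hSnot : S ∉ ℳ := fun hSℳ => (h S hSℳ).not_infinite (by
      rw [Set.inter_self]; exact hS.2.2.1)
    have hins : insert S ℳ ∈ {𝒜 : Set (Set X) | 𝒜 ⊆ rangeFamily P ∧
          ∀ A ∈ 𝒜, ∀ B ∈ 𝒜, A ≠ B → (A ∩ B).Finite} := by
        constructor
        · rintro A (rfl | hA)
          · exact hS
          · exact hsub hA
        · rintro A (rfl | hA) B (rfl | hB) hne
          · exact absurd rfl hne
          · exact h B hB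
          · rw [Set.inter_comm]; exact h A hA
          · exact hAD A hA B hB hne
    exact hSnot (hmax hins (Set.subset_insert _ _) (Set.mem_insert _ _))

/-- Existence of a good maximal chain: a maximal chain of test sets whose intersection
is itself a test set. -/
theorem exists_good_maximal_chain {X : Type*} [TopologicalSpace X] (P : X)
    (hFU : ∀ A : Set X, P ∈ closure A →
      ∃ a : ℕ → X, (∀ n, a n ∈ A) ∧ Tendsto a atTop (𝓝 P))
    (hT1 : ∀ x : X, x ≠ P → ∃ U : Set X, IsOpen U ∧ P ∈ U ∧ x ∉ U)
    (hni : ∀ U ∈ 𝓝 P, ∃ x ∈ U, x ≠ P)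
    (hD : ∃ f : X → ℝ, ¬ ContinuousAt f P) :
    ∃ C : Set (Set (ℕ → X)),
      (∀ A ∈ C, IsTestSet P A) ∧ IsChain (· ⊆ ·) C ∧
      (∀ C' : Set (Set (ℕ → X)),
        (∀ A ∈ C', IsTestSet P A) → IsChain (· ⊆ ·) C' → C ⊆ C' → C' = C) ∧
      IsTestSet P (⋂₀ C) := by
  classical
  obtain ⟨ℳ, hsub, hAD, hMAD⟩ := aux_mad (X := X) P
  have henum : ∀ M : ℳ, ∃ T : ℕ → X, Function.Injective T ∧
      Set.range T = (M : Set X) ∧ Tendsto T atTop (𝓝 P) :=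
    fun M => aux_enum (hsub M.2)
  choose T hTinj hTrange hTtend using henum
  set A₀ : Set (ℕ → X) := Set.range T with hA₀
  have hTmem : ∀ (M : ℳ) (n : ℕ), T M n ∈ (M : Set X) := by
    intro M n; rw [← hTrange M]; exact Set.mem_range_self n
  -- A₀ is a test set
  have hA₀test : IsTestSet P A₀ := by
    constructor
    · rintro _ ⟨M, rfl⟩; exact hTtend M
    · intro f hf
      obtain ⟨ε, hε, a, ha, hdist⟩ := aux_witness hFU hf
      have hne : ∀ n, a n ≠ P := by
        intro n h
        have := hdist n
        rw [h, dist_self] at this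
        exact absurd (lt_of_lt_of_le hε this) (lt_irrefl 0)
      have hS : Set.range a ∈ rangeFamily P := aux_range hT1 ha hne
      obtain ⟨N, hNℳ, hNinf⟩ := hMAD _ hS
      refine ⟨T ⟨N, hNℳ⟩, Set.mem_range_self _, hTtend _, ?_⟩
      intro hten
      have hev : ∀ᶠ n in atTop, dist (f (T ⟨N, hNℳ⟩ n)) (f P) < ε := by
        filter_upwards [hten (Metric.ball_mem_nhds (f P) hε)] with n hn
        exact hn
      have hpre : (T ⟨N, hNℳ⟩ ⁻¹' (Set.range a ∩ N)).Infinite := by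
        refine hNinf.preimage ?_
        rw [hTrange]; exact Set.inter_subset_right
      have hfr : ∃ᶠ n in atTop, ε ≤ dist (f (T ⟨N, hNℳ⟩ n)) (f P) := by
        rw [Nat.frequently_atTop_iff_infinite]
        refine hpre.mono ?_
        rintro n hn
        obtain ⟨⟨m, hm⟩, -⟩ := hn
        simp only [Set.mem_setOf_eq, ← hm]
        exact hdist m
      obtain ⟨n, h1, h2⟩ := (hev.and_frequently hfr).exists
      exact absurd h1 (not_lt.mpr h2)
  -- least property
  have hleast : ∀ B, IsTestSet P B → B ⊆ A₀ → A₀ ⊆ B := by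
    intro B hB hBA
    rintro _ ⟨M, rfl⟩
    by_contra hTM
    set f : X → ℝ := fun x => if x ∈ (M : Set X) then 1 else 0 with hfdef
    have hfP : f P = 0 := by
      have : P ∉ (M : Set X) := fun hP => (hsub M.2).1 hP rfl
      simp [hfdef, this]
    have hfM : ∀ n, f (T M n) = 1 := by
      intro n; simp [hfdef, hTmem M n]
    have hdisc : ¬ ContinuousAt f P := by
      intro h
      have h1 : Tendsto (fun n => f (T M n)) atTop (𝓝 (f P)) :=
        (h.tendsto).comp (hTtend M)
      have h2 : Tendsto (fun n => f (T M n)) atTop (𝓝 1) := by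
        simp only [hfM]; exact tendsto_const_nhds
      have := tendsto_nhds_unique h1 h2
      rw [hfP] at this
      norm_num at this
    obtain ⟨T', hT'B, -, hT'nt⟩ := hB.2 f hdisc
    obtain ⟨M', hM'⟩ := hBA hT'B
    by_cases hMM : M' = M
    · exact hTM (hMM ▸ hM' ▸ hT'B)
    · refine hT'nt ?_
      rw [← hM', hfP]
      have hfinM : ((M' : Set X) ∩ (M : Set X)).Finite :=
        hAD M' M'.2 M M.2 (fun h => hMM (Subtype.ext h))
      have hprefin : (T M' ⁻¹' ((M' : Set X) ∩ (M : Set X))).Finite :=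
        hfinM.preimage (hTinj M').injOn
      have hevz : ∀ᶠ n in atTop, f (T M' n) = 0 := by
        rw [← Nat.cofinite_eq_atTop]
        refine hprefin.eventually_cofinite_notMem.mono ?_
        intro n hn
        have : T M' n ∉ (M : Set X) := fun hmem => hn ⟨hTmem M' n, hmem⟩
        simp [hfdef, this]
      have hevz' : (fun n => f (T M' n)) =ᶠ[atTop] (fun _ => (0:ℝ)) := hevz
      exact Tendsto.congr' hevz'.symm tendsto_const_nhds
  -- build maximal chain
  let 𝒯 := {B : Set (ℕ → X) // IsTestSet P B}
  let s : Set 𝒯 := {⟨A₀, hA₀test⟩}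
  have hchain : IsChain (fun a b : 𝒯 => a.1 ⊆ b.1) s := by
    intro a ha b hb hne
    rw [Set.mem_singleton_iff] at ha hb
    exact absurd (ha.trans hb.symm) hne
  obtain ⟨t, ⟨htc, htmax⟩, hst⟩ := hchain.exists_maxChain
  have hA₀t : (⟨A₀, hA₀test⟩ : 𝒯) ∈ t := hst rfl
  refine ⟨Subtype.val '' t, ?_, ?_, ?_, ?_⟩
  · rintro _ ⟨B, hBt, rfl⟩; exact B.2
  · rintro _ ⟨B, hBt, rfl⟩ _ ⟨B', hB't, rfl⟩ hne
    exact htc hBt hB't (fun h => hne (congrArg Subtype.val h))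
  · intro C' hC' hchain' hsubC
    have hteq : t = Subtype.val ⁻¹' C' := by
      refine htmax ?_ ?_
      · intro a ha b hb hne
        exact hchain' ha hb (fun h => hne (Subtype.ext h))
      · intro b hb
        exact hsubC ⟨b, hb, rfl⟩
    apply Set.Subset.antisymm _ hsubC
    intro A hA
    exact ⟨⟨A, hC' A hA⟩, by rw [hteq]; exact hA, rfl⟩
  · have heq : ⋂₀ (Subtype.val '' t) = A₀ := by
      apply Set.Subset.antisymm
      · exact Set.sInter_subset_of_mem ⟨_, hA₀t, rfl⟩
      · intro x hx
        rintro _ ⟨⟨B, hBtest⟩, hBt, rfl⟩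
        rcases eq_or_ne (⟨B, hBtest⟩ : 𝒯) ⟨A₀, hA₀test⟩ with h | h
        · have hBA : B = A₀ := congrArg Subtype.val h
          exact hBA ▸ hx
        · rcases htc hBt hA₀t h with hle | hge
          · exact hleast B hBtest hle hx
          · exact hge hx
    rw [heq]; exact hA₀test
end

section
/- Let S_ω be the sequential fan with distinguished point P, and for each n ∈ ℕ let T_n : ℕ → S_ω be the canonical spoke sequence T_n(k) = x_{n,k}. Then the countable family A_min^fan = {T_n : n ∈ ℕ} is a minimal test set at P, and the set S_P of all sequences in S_ω converging to P has cardinality 2^{ℵ_0}; in particular, the cardinality of A_min^fan (namely ℵ_0) is strictly smaller than that of S_P. -/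
open Filter Topology Set

/-- The underlying set of the sequential fan: `P = none`, `x_{n,m} = some (n, m)`. -/
abbrev SeqFan : Type := Option (ℕ × ℕ)

/-- The fan point `P`. -/
def fanPt : SeqFan := none

/-- The topology of the sequential fan: every point `some (n, m)` is isolated, and a set
`U` containing `none` is open iff it contains a cofinite tail of every spoke. -/
instance : TopologicalSpace SeqFan where
  IsOpen U := none ∈ U → ∀ n : ℕ, {m : ℕ | some (n, m) ∉ U}.Finite
  isOpen_univ := by intro _ n; simp
  isOpen_inter := by
    intro s t hs ht hmem n
    have h : {m : ℕ | some (n, m) ∉ s ∩ t} ⊆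
        {m : ℕ | some (n, m) ∉ s} ∪ {m : ℕ | some (n, m) ∉ t} := by
      intro m hm
      by_cases h1 : some (n, m) ∈ s
      · exact Or.inr fun h2 => hm ⟨h1, h2⟩
      · exact Or.inl h1
    exact ((hs hmem.1 n).union (ht hmem.2 n)).subset h
  isOpen_sUnion := by
    intro S hS hmem n
    obtain ⟨t, htS, hnt⟩ := hmem
    exact ((hS t htS hnt n).subset (fun m hm => fun h => hm ⟨t, htS, h⟩))

/-- The `n`-th spoke of the sequential fan. -/
def spoke (n : ℕ) : Set SeqFan := Set.range fun m : ℕ => (some (n, m) : SeqFan)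

/-- The family `I_P` at the fan point: countably infinite subsets of `S_ω \ {P}` that are
almost contained in every open neighborhood of `P`. -/
def fanRangeFamily : Set (Set SeqFan) :=
  {M | M ⊆ {fanPt}ᶜ ∧ M.Countable ∧ M.Infinite ∧
    ∀ U : Set SeqFan, IsOpen U → fanPt ∈ U → (M \ U).Finite}

/-- The family `S_P` of sequences in the fan converging to `P`. -/
def fanSeqTo : Set (ℕ → SeqFan) := {T | Tendsto T atTop (𝓝 fanPt)}

/-- The witness family `D(f)`. -/
def fanWitnessSet (f : SeqFan → ℝ) : Set (ℕ → SeqFan) :=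
  {T | Tendsto T atTop (𝓝 fanPt) ∧ ¬ Tendsto (fun n => f (T n)) atTop (𝓝 (f fanPt))}

/-- `A` is a test set at the fan point `P`. -/
def FanIsTestSet (A : Set (ℕ → SeqFan)) : Prop :=
  A ⊆ fanSeqTo ∧ ∀ f : SeqFan → ℝ, ¬ ContinuousAt f fanPt → (A ∩ fanWitnessSet f).Nonempty

/-- The canonical spoke sequence `T_n(k) = x_{n,k}`. -/
def spokeSeq (n : ℕ) : ℕ → SeqFan := fun k => some (n, k)

lemma fan_isOpen_iff (U : Set SeqFan) :
    IsOpen U ↔ (none ∈ U → ∀ n : ℕ, {m : ℕ | some (n, m) ∉ U}.Finite) := Iff.rfl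

lemma spokeSeq_tendsto (n : ℕ) : Tendsto (spokeSeq n) atTop (𝓝 fanPt) := by
  rw [tendsto_nhds]
  intro U hU hP
  have hfin : {m : ℕ | some (n, m) ∉ U}.Finite := (fan_isOpen_iff U).mp hU hP n
  have : {m : ℕ | spokeSeq n m ∉ U}.Finite := hfin
  have h2 : ∀ᶠ m in cofinite, spokeSeq n m ∈ U := by
    rw [eventually_cofinite]
    simpa using this
  rw [← Nat.cofinite_eq_atTop]
  exact h2

lemma continuousAt_of_spokes {f : SeqFan → ℝ}
    (h : ∀ n, Tendsto (fun k => f (spokeSeq n k)) atTop (𝓝 (f fanPt))) :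
    ContinuousAt f fanPt := by
  rw [ContinuousAt, Metric.tendsto_nhds]
  intro ε hε
  set U : Set SeqFan := {x | dist (f x) (f fanPt) < ε} with hUdef
  have hPU : fanPt ∈ U := by simp [hUdef, hε]
  have hopen : IsOpen U := by
    rw [fan_isOpen_iff]
    intro _ n
    have hev : ∀ᶠ k in atTop, dist (f (spokeSeq n k)) (f fanPt) < ε :=
      (Metric.tendsto_nhds.mp (h n)) ε hε
    rw [← Nat.cofinite_eq_atTop, eventually_cofinite] at hev
    exact hev.subset (fun m hm => by simpa [hUdef, spokeSeq] using hm)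
  exact Filter.eventually_iff_exists_mem.mpr ⟨U, hopen.mem_nhds hPU, fun x hx => hx⟩

lemma spokeSeq_injective : Function.Injective spokeSeq := by
  intro n m h
  have := congrFun h 0
  simpa [spokeSeq] using this

/-- embedding of `ℕ → Bool` into the converging sequences -/
def boolEmb (g : ℕ → Bool) : ℕ → SeqFan := fun k => some ((if g k then 0 else 1), k)

lemma boolEmb_tendsto (g : ℕ → Bool) : Tendsto (boolEmb g) atTop (𝓝 fanPt) := by
  rw [tendsto_nhds]
  intro U hU hP
  have h0 : {m : ℕ | some (0, m) ∉ U}.Finite := (fan_isOpen_iff U).mp hU hP 0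
  have h1 : {m : ℕ | some (1, m) ∉ U}.Finite := (fan_isOpen_iff U).mp hU hP 1
  have hsub : {k : ℕ | boolEmb g k ∉ U} ⊆
      {m : ℕ | some (0, m) ∉ U} ∪ {m : ℕ | some (1, m) ∉ U} := by
    intro k hk
    by_cases hg : g k
    · exact Or.inl (by simpa [boolEmb, hg] using hk)
    · exact Or.inr (by simpa [boolEmb, hg] using hk)
  have : {k : ℕ | boolEmb g k ∉ U}.Finite := ((h0.union h1).subset hsub)
  rw [← Nat.cofinite_eq_atTop]
  exact Filter.mem_cofinite.mpr this

lemma boolEmb_injective : Function.Injective boolEmb := by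
  intro g g' h
  funext k
  have := congrFun h k
  simp only [boolEmb, Option.some.injEq, Prod.mk.injEq] at this
  rcases this with ⟨h1, -⟩
  cases hg : g k <;> cases hg' : g' k <;> simp [hg, hg'] at h1 ⊢


lemma fanSeqTo_card : Cardinal.mk fanSeqTo = 2 ^ Cardinal.aleph0 := by
  apply le_antisymm
  · calc Cardinal.mk fanSeqTo ≤ Cardinal.mk (ℕ → SeqFan) := Cardinal.mk_set_le _
      _ = Cardinal.mk SeqFan ^ Cardinal.aleph0 := by
          rw [← Cardinal.power_def, Cardinal.mk_nat]
      _ = Cardinal.aleph0 ^ Cardinal.aleph0 := by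
          rw [Cardinal.mk_eq_aleph0 SeqFan]
      _ = 2 ^ Cardinal.aleph0 := Cardinal.power_self_eq le_rfl
  · have hemb : Function.Injective (fun g : ℕ → Bool => (⟨boolEmb g, boolEmb_tendsto g⟩ :
        fanSeqTo)) := fun g g' h => boolEmb_injective (congrArg Subtype.val h)
    calc (2 : Cardinal) ^ Cardinal.aleph0 = Cardinal.mk (ℕ → Bool) := by
          rw [← Cardinal.mk_bool, ← Cardinal.mk_nat, Cardinal.power_def]
      _ ≤ Cardinal.mk fanSeqTo := Cardinal.mk_le_of_injective hemb


/-- In the sequential fan, the countable family of canonical spoke sequences is a minimal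
test set at `P`, the full family `S_P` has cardinality `2^ℵ₀`, and in particular the
minimal test set (of cardinality `ℵ₀`) is strictly smaller than `S_P`. -/
theorem fan_minimal_testSet_card :
    FanIsTestSet (Set.range spokeSeq) ∧
      (∀ B : Set (ℕ → SeqFan), B ⊂ Set.range spokeSeq → ¬ FanIsTestSet B) ∧
      Cardinal.mk (Set.range spokeSeq) = Cardinal.aleph0 ∧
      Cardinal.mk fanSeqTo = 2 ^ Cardinal.aleph0 ∧
      Cardinal.mk (Set.range spokeSeq) < Cardinal.mk fanSeqTo := by

  refine ⟨⟨?_, ?_⟩, ?_, ?_, ?_, ?_⟩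
  · rintro T ⟨n, rfl⟩
    exact spokeSeq_tendsto n
  · intro f hf
    by_contra hempty
    apply hf
    apply continuousAt_of_spokes
    intro n
    by_contra hn
    exact Set.not_nonempty_empty (Set.not_nonempty_iff_eq_empty.mp hempty ▸
      (⟨spokeSeq n, ⟨n, rfl⟩, spokeSeq_tendsto n, hn⟩ :
        (Set.range spokeSeq ∩ fanWitnessSet f).Nonempty))
  · intro B hB hBtest
    obtain ⟨T, hT, hTB⟩ := (Set.ssubset_iff_of_subset hB.subset).mp hB
    obtain ⟨n₀, rfl⟩ := hT
    set f : SeqFan → ℝ := fun x => match x with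
      | none => 0
      | some (n, _) => if n = n₀ then 1 else 0 with hfdef
    have hfP : f fanPt = 0 := rfl
    have hspoke0 : ∀ k, f (spokeSeq n₀ k) = 1 := fun k => by simp [hfdef, spokeSeq]
    have hdisc : ¬ ContinuousAt f fanPt := by
      intro hc
      have := (hc.tendsto).comp (spokeSeq_tendsto n₀)
      have heq : (f ∘ spokeSeq n₀) = fun _ : ℕ => (1 : ℝ) := funext hspoke0
      rw [heq, hfP] at this
      have h1 : Tendsto (fun _ : ℕ => (1 : ℝ)) atTop (𝓝 0) := this
      have := tendsto_nhds_unique h1 tendsto_const_nhds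
      norm_num at this
    obtain ⟨T, hTB', hTconv, hTnot⟩ := hBtest.2 f hdisc
    obtain ⟨n, rfl⟩ := hB.subset hTB'
    have hne' : n ≠ n₀ := fun h => hTB (h ▸ hTB')
    apply hTnot
    have : ∀ k, f (spokeSeq n k) = 0 := fun k => by simp [hfdef, spokeSeq, hne']
    simp only [this, hfP]
    exact tendsto_const_nhds
  · rw [Cardinal.mk_range_eq _ spokeSeq_injective]
    exact Cardinal.mk_nat
  · exact fanSeqTo_card
  · rw [Cardinal.mk_range_eq _ spokeSeq_injective, Cardinal.mk_nat, fanSeqTo_card]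
    exact Cardinal.cantor Cardinal.aleph0
end
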